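/- Let G be a k×n matrix over a finite field F_q with property A_t, i.e., for every i ∈ {1,…,k} there exist t pairwise disjoint sets T_1,…,T_t of column indices of G such that for each j some F_q-linear combination of the columns of G indexed by T_j equals the standard basis column vector e_i. Then for any two distinct vectors x_1, x_2 ∈ F_q^k, the Hamming distance between x_1·G and x_2·G is at least t. In particular, G has rank k and the minimum Hamming distance of the linear code generated by G (as the row space encoding x ↦ x·G) is at least t. -/

import Mathlib

/-- Some `F`-linear combination of the columns of `G` indexed by `T` equals the vector `v`. -/
def ColLinComb {F : Type*} [Field F] {k n : ℕ} (G : Matrix (Fin k) (Fin n) F)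
    (T : Finset (Fin n)) (v : Fin k → F) : Prop :=
  ∃ c : Fin n → F, ∑ j ∈ T, c j • G.transpose j = v

/-- `G` has property `A_t`: for every `i` there exist `t` pairwise disjoint sets of column
indices, each admitting a linear combination of the corresponding columns equal to `e_i`. -/
def PropertyA {F : Type*} [Field F] {k n : ℕ} (G : Matrix (Fin k) (Fin n) F) (t : ℕ) : Prop :=
  ∀ i : Fin k, ∃ T : Fin t → Finset (Fin n),
    (∀ j₁ j₂ : Fin t, j₁ ≠ j₂ → Disjoint (T j₁) (T j₂)) ∧
    ∀ j : Fin t, ColLinComb G (T j) (Pi.single i 1)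

theorem key {F : Type*} [Field F] [Fintype F] [DecidableEq F] {k n t : ℕ}
    (G : Matrix (Fin k) (Fin n) F) (hA : PropertyA G t)
    (x : Fin k → F) (hx : x ≠ 0) : t ≤ hammingNorm (Matrix.vecMul x G) := by
  obtain ⟨i, hi⟩ := Function.ne_iff.mp hx
  simp only [Pi.zero_apply] at hi
  obtain ⟨T, hdisj, hcomb⟩ := hA i
  have hex : ∀ j : Fin t, ∃ l ∈ T j, Matrix.vecMul x G l ≠ 0 := by
    intro j
    obtain ⟨c, hc⟩ := hcomb j
    by_contra h
    push_neg at h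
    have hm : ∀ m, ∑ l ∈ T j, c l * G m l = ((Pi.single i 1 : Fin k → F) m) := by
      intro m
      have := congrFun hc m
      simpa [Finset.sum_apply, Matrix.transpose_apply] using this
    have hxi : ∑ l ∈ T j, c l * Matrix.vecMul x G l = x i := by
      calc ∑ l ∈ T j, c l * Matrix.vecMul x G l
          = ∑ l ∈ T j, ∑ m, x m * (c l * G m l) := by
            refine Finset.sum_congr rfl fun l _ => ?_
            simp [Matrix.vecMul, dotProduct, Finset.mul_sum]
            exact Finset.sum_congr rfl fun m _ => by ring
        _ = ∑ m, ∑ l ∈ T j, x m * (c l * G m l) := Finset.sum_comm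
        _ = ∑ m, x m * ((Pi.single i 1 : Fin k → F) m) := by
            refine Finset.sum_congr rfl fun m _ => ?_
            rw [← Finset.mul_sum, hm]
        _ = x i := by simp [Pi.single_apply]
    apply hi
    rw [← hxi]
    exact Finset.sum_eq_zero fun l hl => by rw [h l hl, mul_zero]
  choose g hgmem hgne using hex
  have hginj : Function.Injective g := by
    intro j₁ j₂ hj
    by_contra hne
    exact Finset.disjoint_left.mp (hdisj j₁ j₂ hne) (hgmem j₁) (hj ▸ hgmem j₂)
  calc t = (Finset.univ : Finset (Fin t)).card := by simp
    _ ≤ hammingNorm (Matrix.vecMul x G) :=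
        Finset.card_le_card_of_injOn g (fun j _ => by
          simp only [hammingNorm, Finset.mem_filter, Finset.mem_univ, true_and]
          simpa using hgne j) hginj.injOn

/-- If `G` has property `A_t` (with `t ≥ 1`), then any two distinct messages are encoded to
words of Hamming distance at least `t`; in particular `G` has rank `k` and the minimum
Hamming distance of the code `{x·G}` is at least `t`. -/
theorem propertyA_hammingDist_ge {F : Type*} [Field F] [Fintype F] [DecidableEq F] {k n t : ℕ}
    (ht : 1 ≤ t) (G : Matrix (Fin k) (Fin n) F) (hA : PropertyA G t) :
    (∀ x₁ x₂ : Fin k → F, x₁ ≠ x₂ →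
        t ≤ hammingDist (Matrix.vecMul x₁ G) (Matrix.vecMul x₂ G)) ∧
    G.rank = k ∧
    (∀ x : Fin k → F, x ≠ 0 → t ≤ hammingNorm (Matrix.vecMul x G)) := by
  have key := key G hA
  have hdist : ∀ x₁ x₂ : Fin k → F, x₁ ≠ x₂ →
      t ≤ hammingDist (Matrix.vecMul x₁ G) (Matrix.vecMul x₂ G) := by
    intro x₁ x₂ hne
    rw [hammingDist_eq_hammingNorm, neg_add_eq_sub, ← Matrix.sub_vecMul]
    exact key _ (sub_ne_zero.mpr hne.symm)
  refine ⟨hdist, ?_, key⟩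
  have hinj : Function.Injective (Matrix.mulVecLin G.transpose) := by
    rw [← LinearMap.ker_eq_bot, LinearMap.ker_eq_bot']
    intro x hx
    by_contra hxne
    have h0 : Matrix.vecMul x G = 0 := by
      rw [← Matrix.mulVec_transpose]; exact hx
    have hk := key x hxne
    rw [h0, hammingNorm_zero] at hk
    omega
  rw [← Matrix.rank_transpose, Matrix.rank,
    LinearMap.finrank_range_of_inj hinj, Module.finrank_fin_fun]
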